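/- Let κ be an ordinal and ((K_α)_{α<κ}, (p_α^β)_{α≤β}) a continuous inverse system of compact Hausdorff spaces with surjective bonding maps, meaning that for each limit ordinal λ < κ, (K_λ, (p_γ^λ)_{γ<λ}) is the inverse limit of the restricted system. If p_α^{α+1} is semi-open for every α with α+1 < κ, then p_α^β is semi-open for all α ≤ β < κ. -/

import Mathlib

/-- Let `((K α)_{α<κ}, (p α β)_{α≤β})` be a continuous inverse system of compact
Hausdorff spaces with surjective bonding maps, indexed by an ordinal `κ`; continuity
means that at each limit ordinal `lam < κ`, `K lam` together with the maps
`p γ lam` is the inverse limit (thread space) of the earlier stages. If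
`p α (α+1)` is semi-open for every `α` with `α+1 < κ`, then `p α β` is semi-open for
all `α ≤ β < κ`. -/
theorem stmt_15 (κ : Ordinal.{0})
    (K : ∀ α : Ordinal, α < κ → Type*)
    [∀ α hα, TopologicalSpace (K α hα)] [∀ α hα, CompactSpace (K α hα)]
    [∀ α hα, T2Space (K α hα)]
    (p : ∀ (α β : Ordinal) (hα : α < κ) (hβ : β < κ), α ≤ β → K β hβ → K α hα)
    (hpc : ∀ α β hα hβ (h : α ≤ β), Continuous (p α β hα hβ h))
    (hpsurj : ∀ α β hα hβ (h : α ≤ β), Function.Surjective (p α β hα hβ h))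
    (hpid : ∀ α hα (x : K α hα), p α α hα hα le_rfl x = x)
    (hpcomp : ∀ α β γ hα hβ hγ (h₁ : α ≤ β) (h₂ : β ≤ γ) (x : K γ hγ),
      p α γ hα hγ (h₁.trans h₂) x = p α β hα hβ h₁ (p β γ hβ hγ h₂ x))
    (hcontinuous : ∀ (lam : Ordinal) (hlam : lam < κ), Order.IsSuccLimit lam →
      (Function.Injective (fun (x : K lam hlam) (γ : {γ : Ordinal // γ < lam}) =>
          p γ.1 lam (γ.2.trans hlam) hlam γ.2.le x)) ∧
      (∀ y : ∀ γ : {γ : Ordinal // γ < lam}, K γ.1 (γ.2.trans hlam),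
        (∀ (γ₁ γ₂ : {γ : Ordinal // γ < lam}) (h : γ₁.1 ≤ γ₂.1),
          p γ₁.1 γ₂.1 (γ₁.2.trans hlam) (γ₂.2.trans hlam) h (y γ₂) = y γ₁) →
        ∃ x : K lam hlam, ∀ γ : {γ : Ordinal // γ < lam},
          p γ.1 lam (γ.2.trans hlam) hlam γ.2.le x = y γ))
    (hsucc : ∀ (α : Ordinal) (hs : Order.succ α < κ),
      ∀ U : Set (K (Order.succ α) hs), IsOpen U → U.Nonempty →
        (interior (p α (Order.succ α) ((Order.lt_succ α).trans hs) hs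
          (Order.le_succ α) '' U)).Nonempty) :
    ∀ α β hα hβ (h : α ≤ β), ∀ U : Set (K β hβ), IsOpen U → U.Nonempty →
      (interior (p α β hα hβ h '' U)).Nonempty := by

  have main : ∀ β : Ordinal, ∀ hβ : β < κ, ∀ α hα (hle : α ≤ β),
      ∀ U : Set (K β hβ), IsOpen U → U.Nonempty →
      (interior (p α β hα hβ hle '' U)).Nonempty := by
    intro β
    induction β using Ordinal.induction with
    | h β IH =>
      intro hβ α hα hle U hU hUne
      rcases eq_or_lt_of_le hle with rfl | hlt
      · have hfun : p α α hα hβ hle = id := funext fun x => hpid α hα x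
        rw [hfun, Set.image_id, hU.interior_eq]
        exact hUne
      rcases Ordinal.zero_or_succ_or_isSuccLimit β with rfl | ⟨γ, rfl⟩ | hlim
      · exact absurd hlt (not_lt_of_ge (zero_le (a := α)))
      · -- successor case
        have hγ : γ < κ := (Order.lt_succ γ).trans hβ
        have hαγ : α ≤ γ := Order.lt_succ_iff.mp hlt
        obtain ⟨x, hx⟩ := hsucc γ hβ U hU hUne
        obtain ⟨y, hy⟩ := IH γ (Order.lt_succ γ) hγ α hα hαγ _ isOpen_interior ⟨x, hx⟩
        refine ⟨y, ?_⟩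
        refine interior_mono ?_ hy
        intro w hw
        obtain ⟨v, hv, rfl⟩ := hw
        obtain ⟨z, hz, hzv⟩ := interior_subset hv
        exact ⟨z, hz, by rw [hpcomp α γ (Order.succ γ) hα hγ hβ hαγ (Order.le_succ γ) z, hzv]⟩
      · -- limit case
        set e : K β hβ → ∀ γ : {γ : Ordinal // γ < β}, K γ.1 (γ.2.trans hβ) :=
          fun x γ => p γ.1 β (γ.2.trans hβ) hβ γ.2.le x with he
        have hecont : Continuous e := continuous_pi fun γ => hpc _ _ _ _ _
        have heinj : Function.Injective e := (hcontinuous β hβ hlim).1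
        have hemb : Topology.IsInducing e := (hecont.isClosedEmbedding heinj).toIsInducing
        obtain ⟨x₀, hx₀⟩ := hUne
        obtain ⟨W, hW, hWU⟩ := hemb.isOpen_iff.mp hU
        have hx₀W : e x₀ ∈ W := by rw [← hWU] at hx₀; exact hx₀
        obtain ⟨I, u, hu, hsub⟩ := isOpen_pi_iff.mp hW (e x₀) hx₀W
        set δ : Ordinal := I.sup (fun i => i.1) ⊔ α with hδ
        have hδβ : δ < β := by
          apply max_lt _ hlt
          apply Finset.sup_lt_iff (by exact hlim.pos) |>.mpr
          exact fun i _ => i.2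
        have hδκ : δ < κ := hδβ.trans hβ
        have hαδ : α ≤ δ := le_max_right _ _
        have hIle : ∀ i ∈ I, i.1 ≤ δ := fun i hi => (Finset.le_sup hi).trans (le_max_left _ _)
        set V : Set (K δ hδκ) :=
          ⋂ j : {i // i ∈ I}, (p j.1.1 δ (j.1.2.trans hβ) hδκ (hIle j.1 j.2)) ⁻¹' u j.1 with hV
        have hVopen : IsOpen V :=
          isOpen_iInter_of_finite fun j => (hu j.1 j.2).1.preimage (hpc _ _ _ _ _)
        have hVmem : ∀ z : K β hβ, ∀ i (hi : i ∈ I),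
            p i.1 δ (i.2.trans hβ) hδκ (hIle i hi) (p δ β hδκ hβ hδβ.le z) = e z i := by
          intro z i hi
          rw [← hpcomp i.1 δ β (i.2.trans hβ) hδκ hβ (hIle i hi) hδβ.le z]
        have hVne : p δ β hδκ hβ hδβ.le x₀ ∈ V := by
          rw [hV]
          refine Set.mem_iInter.mpr fun j => ?_
          show p j.1.1 δ _ hδκ _ (p δ β hδκ hβ hδβ.le x₀) ∈ u j.1
          rw [hVmem x₀ j.1 j.2]
          exact (hu j.1 j.2).2
        have hpreU : p δ β hδκ hβ hδβ.le ⁻¹' V ⊆ U := by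
          intro z hz
          rw [← hWU]
          apply hsub
          intro i hi
          have hi' : i ∈ I := Finset.mem_coe.mp hi
          have h2 : p i.1 δ (i.2.trans hβ) hδκ (hIle i hi')
              (p δ β hδκ hβ hδβ.le z) ∈ u i := Set.mem_iInter.mp hz ⟨i, hi'⟩
          rw [hVmem z i hi'] at h2
          exact h2
        have himg : p α δ hα hδκ hαδ '' V ⊆ p α β hα hβ hle '' U := by
          rintro w ⟨v, hvV, rfl⟩
          obtain ⟨z, hz⟩ := hpsurj δ β hδκ hβ hδβ.le v
          refine ⟨z, hpreU (by rw [Set.mem_preimage, hz]; exact hvV), ?_⟩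
          rw [hpcomp α δ β hα hδκ hβ hαδ hδβ.le z, hz]
        obtain ⟨y, hy⟩ := IH δ hδβ hδκ α hα hαδ V hVopen ⟨_, hVne⟩
        exact ⟨y, interior_mono himg hy⟩
  intro α β hα hβ h
  exact main β hβ α hα h
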